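/- Let K and N be positive integers, f₀, x₀, λ ∈ ℝ, f(t) = f₀ + λ·t, and let x : ℕ → ℝ satisfy x(0) = x₀ and x(t+1) = (K·f(t) + N·x(t))/(K+N) for all t ∈ ℕ. Then for all t ∈ ℕ, |f(t) − x(t) − λ·(K+N)/K| = (N/(K+N))^t · |f₀ − x₀ − λ·(K+N)/K|; that is, the gap between the manipulative and the normal opinion approaches its limiting value λ·(K+N)/K geometrically with ratio N/(K+N). -/
import Mathlib


theorem hk_gap_geometric_approach
    (K N : ℕ) (hK : 0 < K) (hN : 0 < N)
    (f₀ x₀ l : ℝ) (f : ℕ → ℝ) (hf : ∀ t : ℕ, f t = f₀ + l * (t : ℝ))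
    (x : ℕ → ℝ) (hx0 : x 0 = x₀)
    (hx : ∀ t : ℕ, x (t + 1) = ((K : ℝ) * f t + (N : ℝ) * x t) / ((K : ℝ) + (N : ℝ))) :
    ∀ t : ℕ,
      |f t - x t - l * ((K : ℝ) + (N : ℝ)) / (K : ℝ)| =
        ((N : ℝ) / ((K : ℝ) + (N : ℝ))) ^ t *
          |f₀ - x₀ - l * ((K : ℝ) + (N : ℝ)) / (K : ℝ)| := by
  have hKpos : (0:ℝ) < K := by exact_mod_cast hK
  have hNpos : (0:ℝ) < N := by exact_mod_cast hN
  have hKN : (0:ℝ) < (K:ℝ) + N := by linarith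
  intro t
  induction t with
  | zero => simp [hf 0, hx0]
  | succ n ih =>
      have key : f (n+1) - x (n+1) - l * ((K : ℝ) + N) / K =
          ((N:ℝ) / ((K:ℝ) + N)) * (f n - x n - l * ((K : ℝ) + N) / K) := by
        rw [hx n, hf (n+1), hf n]
        push_cast
        field_simp
        ring
      rw [key, abs_mul, abs_of_nonneg (by positivity : (0:ℝ) ≤ (N:ℝ)/((K:ℝ)+N)), ih,
        pow_succ]
      ring
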